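/- Let f : X → X be a measurable map on a measurable space, μ a probability measure on X (not necessarily invariant), and 𝒫 a finite measurable partition of X. For n ≥ 1 write 𝒫^n = ⋁_{j=0}^{n-1} f^{-j}𝒫. Then for every n > 0 and every 0 < m < n, (1/n) H_μ(𝒫^n) ≤ (1/m) H_{μ_n}(𝒫^m) + (2m/n) log(#𝒫), where μ_n = (1/n) Σ_{k=0}^{n-1} μ ∘ f^{-k} and #𝒫 is the cardinality of 𝒫. -/

import Mathlib

open MeasureTheory Filter Real
open scoped ENNReal

namespace EntropyAux

lemma jensen_negMulLog {α : Type*} (t : Finset α) (w p : α → ℝ)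
    (hw : ∀ a ∈ t, 0 ≤ w a) (hw1 : ∑ a ∈ t, w a = 1) (hp : ∀ a ∈ t, 0 ≤ p a) :
    ∑ a ∈ t, w a * Real.negMulLog (p a) ≤ Real.negMulLog (∑ a ∈ t, w a * p a) := by
  simpa [smul_eq_mul] using
    Real.concaveOn_negMulLog.le_map_sum hw hw1 (fun a ha => hp a ha)

lemma sum_negMulLog_le_log_card {α : Type*} [Fintype α] (p : α → ℝ)
    (hp : ∀ a, 0 ≤ p a) (hp1 : ∑ a, p a = 1) :
    ∑ a, Real.negMulLog (p a) ≤ Real.log (Fintype.card α) := by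
  have hnan : Nonempty α := by
    by_contra h
    rw [not_nonempty_iff] at h
    simp [Finset.univ_eq_empty] at hp1
  have hne : (Fintype.card α : ℝ) ≠ 0 := by
    simp [Fintype.card_ne_zero]
  set N : ℝ := (Fintype.card α : ℝ) with hN
  have hNpos : 0 < N := by positivity
  have hj := jensen_negMulLog Finset.univ (fun _ => N⁻¹) p
    (fun a _ => by positivity) (by simp [Finset.sum_const, hN]) (fun a _ => hp a)
  have hsum : ∑ a, N⁻¹ * p a = N⁻¹ := by
    rw [← Finset.mul_sum, hp1, mul_one]
  rw [hsum] at hj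
  have hval : Real.negMulLog N⁻¹ = N⁻¹ * Real.log N := by
    rw [Real.negMulLog, Real.log_inv]; ring
  have : N⁻¹ * ∑ a, Real.negMulLog (p a) ≤ N⁻¹ * Real.log N := by
    calc N⁻¹ * ∑ a, Real.negMulLog (p a) = ∑ a, N⁻¹ * Real.negMulLog (p a) := by
            rw [Finset.mul_sum]
      _ ≤ Real.negMulLog N⁻¹ := hj
      _ = N⁻¹ * Real.log N := hval
  have := mul_le_mul_of_nonneg_left this (le_of_lt hNpos)
  rw [← mul_assoc, ← mul_assoc, mul_inv_cancel₀ hne, one_mul, one_mul] at this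
  exact this

lemma negMulLog_subadd {α β : Type*} [Fintype α] [Fintype β] (p : α → β → ℝ)
    (hp : ∀ a b, 0 ≤ p a b) (htot : ∑ a, ∑ b, p a b = 1) :
    ∑ a, ∑ b, Real.negMulLog (p a b) ≤
      (∑ a, Real.negMulLog (∑ b, p a b)) + ∑ b, Real.negMulLog (∑ a, p a b) := by
  classical
  set q : α → ℝ := fun a => ∑ b, p a b with hq
  set T : α → β → ℝ := fun a b => if q a = 0 then 0 else p a b / q a with hT
  have hqnn : ∀ a, 0 ≤ q a := fun a => Finset.sum_nonneg fun b _ => hp a b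
  have hTnn : ∀ a b, 0 ≤ T a b := by
    intro a b; by_cases h : q a = 0
    · simp [hT, h]
    · simp only [hT, if_neg h]; exact div_nonneg (hp a b) (hqnn a)
  have hzero : ∀ a, q a = 0 → ∀ b, p a b = 0 := by
    intro a ha b
    have := (Finset.sum_eq_zero_iff_of_nonneg (fun b _ => hp a b)).1 ha
    exact this b (Finset.mem_univ b)
  have hqT : ∀ a b, q a * T a b = p a b := by
    intro a b
    by_cases h : q a = 0
    · simp [hT, h, hzero a h b]
    · simp only [hT, if_neg h]; field_simp
  have hrow : ∀ a, ∑ b, Real.negMulLog (p a b)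
      = Real.negMulLog (q a) + q a * ∑ b, Real.negMulLog (T a b) := by
    intro a
    by_cases h : q a = 0
    · simp [h, fun b => hzero a h b]
    · have hTsum : ∑ b, T a b = 1 := by
        simp only [hT, if_neg h]
        rw [← Finset.sum_div]
        have hqa : ∑ b, p a b = q a := rfl
        rw [hqa]
        exact div_self h
      calc ∑ b, Real.negMulLog (p a b)
          = ∑ b, (T a b * Real.negMulLog (q a) + q a * Real.negMulLog (T a b)) := by
            refine Finset.sum_congr rfl fun b _ => ?_
            rw [← hqT a b, Real.negMulLog_mul]
        _ = Real.negMulLog (q a) + q a * ∑ b, Real.negMulLog (T a b) := by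
            rw [Finset.sum_add_distrib, ← Finset.sum_mul, hTsum, one_mul, ← Finset.mul_sum]
  have hcol : ∀ b, ∑ a, q a * T a b = ∑ a, p a b := by
    intro b
    exact Finset.sum_congr rfl fun a _ => hqT a b
  calc ∑ a, ∑ b, Real.negMulLog (p a b)
      = ∑ a, Real.negMulLog (q a) + ∑ a, q a * ∑ b, Real.negMulLog (T a b) := by
        rw [← Finset.sum_add_distrib]; exact Finset.sum_congr rfl fun a _ => hrow a
    _ = ∑ a, Real.negMulLog (q a) + ∑ b, ∑ a, q a * Real.negMulLog (T a b) := by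
        congr 1
        calc ∑ a, q a * ∑ b, Real.negMulLog (T a b)
            = ∑ a, ∑ b, q a * Real.negMulLog (T a b) :=
              Finset.sum_congr rfl fun a _ => Finset.mul_sum _ _ _
          _ = ∑ b, ∑ a, q a * Real.negMulLog (T a b) := Finset.sum_comm
    _ ≤ ∑ a, Real.negMulLog (q a) + ∑ b, Real.negMulLog (∑ a, q a * T a b) := by
        gcongr with b _
        exact jensen_negMulLog Finset.univ q (fun a => T a b)
          (fun a _ => hqnn a) htot (fun a _ => hTnn a b)
    _ = (∑ a, Real.negMulLog (∑ b, p a b)) + ∑ b, Real.negMulLog (∑ a, p a b) := by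
        congr 1
        exact Finset.sum_congr rfl fun b _ => by rw [hcol b]

end EntropyAux
open MeasureTheory Filter Real
open scoped ENNReal

set_option linter.unusedSectionVars false
namespace EntropyAux

section Meas

variable {X : Type*} [MeasurableSpace X] {ι : Type*} [Fintype ι]

/-- sum over a finite measurable partition -/
lemma sum_measure_inter_partition (ν : Measure X) [IsFiniteMeasure ν]
    {κ : Type*} [Fintype κ] {B : κ → Set X} (hmB : ∀ b, MeasurableSet (B b))
    (hdB : Pairwise (Function.onFun Disjoint B)) (hcB : ⋃ b, B b = Set.univ)
    {S : Set X} (hS : MeasurableSet S) :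
    ∑ b, (ν (S ∩ B b)).toReal = (ν S).toReal := by
  have hν : ν S = ∑ b, ν (S ∩ B b) := by
    calc ν S = ν (⋃ b, S ∩ B b) := by rw [← Set.inter_iUnion, hcB, Set.inter_univ]
      _ = ∑' b, ν (S ∩ B b) :=
          measure_iUnion
            (fun b c hbc => ((hdB hbc).mono Set.inter_subset_right Set.inter_subset_right))
            (fun b => hS.inter (hmB b))
      _ = ∑ b, ν (S ∩ B b) := tsum_fintype _
  rw [hν, ENNReal.toReal_sum (fun b _ => measure_ne_top ν _)]

variable (f : X → X) (P : ι → Set X)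

/-- the cell of the refined partition `P^n` -/
def cell (n : ℕ) (a : Fin n → ι) : Set X := ⋂ j : Fin n, f^[(j : ℕ)] ⁻¹' P (a j)

/-- static entropy of `P^n` w.r.t. `ν` -/
noncomputable def ent (ν : Measure X) (n : ℕ) : ℝ :=
  ∑ a : Fin n → ι, Real.negMulLog ((ν (cell f P n a)).toReal)

variable {f P}
variable (hf : Measurable f) (hmeas : ∀ i, MeasurableSet (P i))
  (hdisj : Pairwise (Function.onFun Disjoint P)) (hcover : ⋃ i, P i = Set.univ)

include hf hmeas in
lemma cell_measurable (n : ℕ) (a : Fin n → ι) : MeasurableSet (cell f P n a) :=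
  MeasurableSet.iInter fun j => (hf.iterate (j : ℕ)) (hmeas (a j))

include hdisj in
lemma cell_disjoint (n : ℕ) : Pairwise (Function.onFun Disjoint (cell f P n)) := by
  intro a b hab
  obtain ⟨j, hj⟩ : ∃ j, a j ≠ b j := by
    by_contra h; push_neg at h; exact hab (funext h)
  refine Set.disjoint_left.2 fun x hxa hxb => ?_
  have h1 := Set.mem_iInter.1 hxa j
  have h2 := Set.mem_iInter.1 hxb j
  exact Set.disjoint_left.1 (hdisj hj) h1 h2

include hcover in
lemma cell_cover (n : ℕ) : ⋃ a : Fin n → ι, cell f P n a = Set.univ := by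
  refine Set.eq_univ_of_forall fun x => ?_
  have hex : ∀ y : X, ∃ i, y ∈ P i := fun y => by
    have : y ∈ ⋃ i, P i := hcover ▸ Set.mem_univ y
    exact Set.mem_iUnion.1 this
  exact Set.mem_iUnion.2 ⟨fun j => (hex (f^[(j : ℕ)] x)).choose,
    Set.mem_iInter.2 fun j => (hex (f^[(j : ℕ)] x)).choose_spec⟩

include hf hmeas hdisj hcover in
lemma sum_cell (ν : Measure X) [IsFiniteMeasure ν] (n : ℕ) {S : Set X}
    (hS : MeasurableSet S) :
    ∑ a : Fin n → ι, (ν (S ∩ cell f P n a)).toReal = (ν S).toReal :=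
  sum_measure_inter_partition ν (cell_measurable hf hmeas n)
    (cell_disjoint hdisj n) (cell_cover hcover n) hS

/-- decomposition of a cell of level `s+t` -/
lemma cell_append (s t : ℕ) (a : Fin s → ι) (b : Fin t → ι) :
    cell f P (s + t)
        ((Equiv.sumArrowEquivProdArrow _ _ ι).symm (a, b) ∘ finSumFinEquiv.symm)
      = cell f P s a ∩ f^[s] ⁻¹' (cell f P t b) := by
  unfold cell
  rw [← Function.Surjective.iInter_comp finSumFinEquiv.surjective, Set.iInter_sum]
  congr 1
  · refine Set.iInter_congr fun i => ?_
    simp [Equiv.sumArrowEquivProdArrow]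
  · rw [Set.preimage_iInter]
    refine Set.iInter_congr fun i => ?_
    have h1 : ((finSumFinEquiv (Sum.inr i) : Fin (s + t)) : ℕ) = s + (i : ℕ) := by simp
    simp only [Equiv.symm_apply_apply, Equiv.sumArrowEquivProdArrow, Equiv.coe_fn_symm_mk,
      Function.comp_apply, Equiv.symm_apply_apply, Sum.elim_inr, h1]
    rw [add_comm s (i : ℕ), Function.iterate_add, Set.preimage_comp]

end Meas

end EntropyAux
section C
open EntropyAux
variable {X : Type*} [MeasurableSpace X] {ι : Type*} [Fintype ι]
variable {f : X → X} {P : ι → Set X}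
variable (hf : Measurable f) (hmeas : ∀ i, MeasurableSet (P i))
  (hdisj : Pairwise (Function.onFun Disjoint P)) (hcover : ⋃ i, P i = Set.univ)

namespace EntropyAux

include hf hmeas hdisj hcover in
lemma ent_add_le (ν : Measure X) [IsProbabilityMeasure ν] (s t : ℕ) :
    ent f P ν (s + t) ≤ ent f P ν s + ent f P (Measure.map f^[s] ν) t := by
  classical
  have hfs : Measurable (f^[s]) := hf.iterate s
  set p : (Fin s → ι) → (Fin t → ι) → ℝ :=
    fun a b => (ν (cell f P s a ∩ f^[s] ⁻¹' cell f P t b)).toReal with hp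
  have hpnn : ∀ a b, 0 ≤ p a b := fun a b => ENNReal.toReal_nonneg
  -- pullback partition properties
  have hmB : ∀ b : Fin t → ι, MeasurableSet (f^[s] ⁻¹' cell f P t b) :=
    fun b => hfs (cell_measurable hf hmeas t b)
  have hdB : Pairwise (Function.onFun Disjoint (fun b : Fin t → ι => f^[s] ⁻¹' cell f P t b)) :=
    fun b c hbc => Disjoint.preimage f^[s] ((cell_disjoint hdisj t) hbc)
  have hcB : ⋃ b : Fin t → ι, f^[s] ⁻¹' cell f P t b = Set.univ := by
    rw [← Set.preimage_iUnion, cell_cover hcover t, Set.preimage_univ]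
  have hrow : ∀ a, ∑ b, p a b = (ν (cell f P s a)).toReal := fun a =>
    sum_measure_inter_partition ν hmB hdB hcB (cell_measurable hf hmeas s a)
  have hcol : ∀ b, ∑ a, p a b = ((Measure.map f^[s] ν) (cell f P t b)).toReal := by
    intro b
    rw [Measure.map_apply hfs (cell_measurable hf hmeas t b)]
    calc ∑ a, p a b = ∑ a, (ν ((f^[s] ⁻¹' cell f P t b) ∩ cell f P s a)).toReal :=
          Finset.sum_congr rfl fun a _ => by rw [hp]; rw [Set.inter_comm]
      _ = (ν (f^[s] ⁻¹' cell f P t b)).toReal :=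
          sum_cell hf hmeas hdisj hcover ν s (hmB b)
  have htot : ∑ a, ∑ b, p a b = 1 := by
    rw [Finset.sum_congr rfl fun a _ => hrow a]
    have := sum_cell hf hmeas hdisj hcover ν s (S := Set.univ) MeasurableSet.univ
    simp only [Set.univ_inter] at this
    rw [this, measure_univ, ENNReal.toReal_one]
  have hmain := negMulLog_subadd p hpnn htot
  -- rewrite LHS
  have hL : ent f P ν (s + t) = ∑ a, ∑ b, Real.negMulLog (p a b) := by
    unfold ent
    set e : ((Fin s → ι) × (Fin t → ι)) ≃ (Fin (s + t) → ι) :=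
      (Equiv.sumArrowEquivProdArrow _ _ ι).symm.trans
        (Equiv.arrowCongr finSumFinEquiv (Equiv.refl ι)) with he
    rw [← Equiv.sum_comp e (fun c => Real.negMulLog ((ν (cell f P (s + t) c)).toReal)),
      Fintype.sum_prod_type]
    refine Finset.sum_congr rfl fun a _ => Finset.sum_congr rfl fun b _ => ?_
    have hee : e (a, b) = (Equiv.sumArrowEquivProdArrow _ _ ι).symm (a, b) ∘ finSumFinEquiv.symm := by
      rw [he]; rfl
    simp only [hee]
    rw [cell_append s t a b (f := f) (P := P)]
  rw [hL]
  refine hmain.trans ?_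
  apply add_le_add
  · exact le_of_eq (Finset.sum_congr rfl fun a _ => by rw [hrow a])
  · exact le_of_eq (Finset.sum_congr rfl fun b _ => by rw [hcol b])

include hf hmeas hdisj hcover in
lemma ent_nonneg (ν : Measure X) [IsProbabilityMeasure ν] (k : ℕ) : 0 ≤ ent f P ν k := by
  refine Finset.sum_nonneg fun a _ => Real.negMulLog_nonneg ENNReal.toReal_nonneg ?_
  have h1 : ν (cell f P k a) ≤ 1 := prob_le_one
  calc (ν (cell f P k a)).toReal ≤ (1 : ℝ≥0∞).toReal :=
        ENNReal.toReal_mono ENNReal.one_ne_top h1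
    _ = 1 := ENNReal.toReal_one

include hf hmeas hdisj hcover in
lemma ent_le (ν : Measure X) [IsProbabilityMeasure ν] (k : ℕ) :
    ent f P ν k ≤ (k : ℝ) * Real.log (Fintype.card ι) := by
  classical
  have hsum : ∑ a : Fin k → ι, (ν (cell f P k a)).toReal = 1 := by
    have := sum_cell hf hmeas hdisj hcover ν k (S := Set.univ) MeasurableSet.univ
    simp only [Set.univ_inter] at this
    rw [this, measure_univ, ENNReal.toReal_one]
  have h := sum_negMulLog_le_log_card (fun a : Fin k → ι => (ν (cell f P k a)).toReal)
    (fun a => ENNReal.toReal_nonneg) hsum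
  refine h.trans (le_of_eq ?_)
  rw [Fintype.card_fun, Fintype.card_fin, Nat.cast_pow, Real.log_pow]

end EntropyAux
end C
section D
variable {X : Type*} [MeasurableSpace X] {ι : Type*} [Fintype ι]
variable {f : X → X} {P : ι → Set X}
variable (hf : Measurable f) (hmeas : ∀ i, MeasurableSet (P i))
  (hdisj : Pairwise (Function.onFun Disjoint P)) (hcover : ⋃ i, P i = Set.univ)

namespace EntropyAux

lemma ent_avg (n : ℕ) (hn : 0 < n) (ν : ℕ → Measure X)
    (hprob : ∀ k, IsProbabilityMeasure (ν k)) (m : ℕ) :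
    ∑ k ∈ Finset.range n, ent f P (ν k) m ≤
      (n : ℝ) * ent f P ((n : ℝ≥0∞)⁻¹ • ∑ k ∈ Finset.range n, ν k) m := by
  have hn0 : (n : ℝ) ≠ 0 := Nat.cast_ne_zero.2 hn.ne'
  unfold ent
  rw [Finset.sum_comm, Finset.mul_sum]
  refine Finset.sum_le_sum fun a _ => ?_
  set C := cell f P m a with hC
  have hfin : ∀ k, ν k C ≠ ⊤ := fun k => by
    haveI := hprob k; exact measure_ne_top _ _
  have hq : (((n : ℝ≥0∞)⁻¹ • ∑ k ∈ Finset.range n, ν k) C).toReal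
      = (n : ℝ)⁻¹ * ∑ k ∈ Finset.range n, (ν k C).toReal := by
    rw [Measure.smul_apply, smul_eq_mul, ENNReal.toReal_mul, ENNReal.toReal_inv,
      ENNReal.toReal_natCast, Measure.finset_sum_apply,
      ENNReal.toReal_sum (fun k _ => hfin k)]
  have hj := jensen_negMulLog (Finset.range n) (fun _ => (n : ℝ)⁻¹)
    (fun k => (ν k C).toReal) (fun k _ => by positivity)
    (by simp [Finset.sum_const, Finset.card_range]; field_simp)
    (fun k _ => ENNReal.toReal_nonneg)
  rw [← Finset.mul_sum] at hj
  have h2 : ∑ k ∈ Finset.range n, Real.negMulLog ((ν k C).toReal)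
      ≤ (n : ℝ) * Real.negMulLog ((n : ℝ)⁻¹ * ∑ k ∈ Finset.range n, (ν k C).toReal) := by
    have := mul_le_mul_of_nonneg_left hj (by positivity : (0:ℝ) ≤ (n:ℝ))
    rw [← Finset.mul_sum, ← mul_assoc, mul_inv_cancel₀ hn0, one_mul] at this
    exact this
  rw [hq]
  exact h2

include hf hmeas hdisj hcover in
lemma ent_blocks (μ : Measure X) [IsProbabilityMeasure μ] (c m q : ℕ) :
    ent f P μ (c + q * m) ≤
      ent f P μ c + ∑ j ∈ Finset.range q, ent f P (Measure.map f^[c + j * m] μ) m := by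
  induction q with
  | zero => simp
  | succ q ih =>
    have h1 : c + (q + 1) * m = (c + q * m) + m := by ring
    rw [h1, Finset.sum_range_succ]
    calc ent f P μ ((c + q * m) + m)
        ≤ ent f P μ (c + q * m) + ent f P (Measure.map f^[c + q * m] μ) m :=
          ent_add_le hf hmeas hdisj hcover μ (c + q * m) m
      _ ≤ (ent f P μ c + ∑ j ∈ Finset.range q, ent f P (Measure.map f^[c + j * m] μ) m)
            + ent f P (Measure.map f^[c + q * m] μ) m := add_le_add_left ih _
      _ = _ := by ring

end EntropyAux
end D
/-- For a probability measure `μ` (not necessarily invariant), a measurable map `f`,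
and a finite measurable partition `P` (indexed by `ι`), with `H ν n` denoting the static
entropy `H_ν(P^n)` of the join `P^n = ⋁_{j<n} f^{-j}P`, one has for `0 < m < n`:
`(1/n) H_μ(P^n) ≤ (1/m) H_{μ_n}(P^m) + (2m/n) log #P`,
where `μ_n = (1/n) ∑_{k<n} μ ∘ f^{-k}`. -/
theorem entropy_average_measure_bound
    {X : Type*} [MeasurableSpace X] (μ : Measure X) [IsProbabilityMeasure μ]
    (f : X → X) (hf : Measurable f)
    {ι : Type*} [Fintype ι] (P : ι → Set X)
    (hmeas : ∀ i, MeasurableSet (P i))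
    (hdisj : Pairwise (Function.onFun Disjoint P))
    (hcover : ⋃ i, P i = Set.univ)
    (H : Measure X → ℕ → ℝ)
    (hH : ∀ (ν : Measure X) (n : ℕ),
      H ν n = ∑ a : Fin n → ι,
        Real.negMulLog ((ν (⋂ j : Fin n, f^[(j : ℕ)] ⁻¹' P (a j))).toReal))
    (n m : ℕ) (hm : 0 < m) (hmn : m < n) :
    (1 / (n : ℝ)) * H μ n ≤
      (1 / (m : ℝ)) * H ((n : ℝ≥0∞)⁻¹ • ∑ k ∈ Finset.range n, Measure.map f^[k] μ) m
        + (2 * (m : ℝ) / (n : ℝ)) * Real.log (Fintype.card ι) := by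
  classical
  open EntropyAux in
  have hent : ∀ (ν : Measure X) (k : ℕ), H ν k = EntropyAux.ent f P ν k :=
    fun ν k => (hH ν k).trans rfl
  have hn : 0 < n := hm.trans hmn
  have hprob : ∀ k : ℕ, IsProbabilityMeasure (Measure.map f^[k] μ) :=
    fun k => Measure.isProbabilityMeasure_map (hf.iterate k).aemeasurable
  set L := Real.log (Fintype.card ι) with hLdef
  have hXne : Nonempty X := by
    by_contra h
    rw [not_nonempty_iff] at h
    have h0 : μ Set.univ = 0 := by simp [Set.univ_eq_empty_iff.2 h]
    rw [measure_univ] at h0; exact one_ne_zero h0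
  have hιne : Nonempty ι := by
    obtain ⟨x⟩ := hXne
    have : x ∈ ⋃ i, P i := hcover ▸ Set.mem_univ x
    obtain ⟨i, -⟩ := Set.mem_iUnion.1 this
    exact ⟨i⟩
  have hLnn : 0 ≤ L := Real.log_nonneg (Nat.one_le_cast.2 Fintype.card_pos)
  set G : ℕ → ℝ := fun k => EntropyAux.ent f P (Measure.map f^[k] μ) m with hGdef
  have hGnn : ∀ k, 0 ≤ G k := fun k => by
    haveI := hprob k
    exact EntropyAux.ent_nonneg hf hmeas hdisj hcover _ m
  -- step 1 : per residue bound
  have hstep : ∀ r, r < m → EntropyAux.ent f P μ n ≤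
      (∑ j ∈ Finset.range ((n - r) / m), G (r + j * m)) + 2 * (m : ℝ) * L := by
    intro r hr
    set q := (n - r) / m with hqdef
    set s := (n - r) % m with hsdef
    have hdm := Nat.div_add_mod (n - r) m
    have hrn : r ≤ n := le_of_lt (hr.trans hmn)
    have hneq : n = (r + q * m) + s := by
      have hq' : q * m + s = n - r := by rw [mul_comm]; exact hdm
      omega
    have hsm : s < m := Nat.mod_lt _ hm
    calc EntropyAux.ent f P μ n = EntropyAux.ent f P μ ((r + q * m) + s) := by rw [← hneq]
      _ ≤ EntropyAux.ent f P μ (r + q * m)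
            + EntropyAux.ent f P (Measure.map f^[r + q * m] μ) s :=
          EntropyAux.ent_add_le hf hmeas hdisj hcover μ _ s
      _ ≤ (EntropyAux.ent f P μ r + ∑ j ∈ Finset.range q, G (r + j * m))
            + EntropyAux.ent f P (Measure.map f^[r + q * m] μ) s :=
          add_le_add_left (EntropyAux.ent_blocks hf hmeas hdisj hcover μ r m q) _
      _ ≤ ((r : ℝ) * L + ∑ j ∈ Finset.range q, G (r + j * m)) + (s : ℝ) * L := by
          haveI := hprob (r + q * m)
          refine add_le_add (add_le_add_left ?_ _) ?_
          · exact EntropyAux.ent_le hf hmeas hdisj hcover μ r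
          · exact EntropyAux.ent_le hf hmeas hdisj hcover _ s
      _ ≤ (∑ j ∈ Finset.range q, G (r + j * m)) + 2 * (m : ℝ) * L := by
          have h1 : (r : ℝ) ≤ (m : ℝ) := Nat.cast_le.2 hr.le
          have h2 : (s : ℝ) ≤ (m : ℝ) := Nat.cast_le.2 hsm.le
          nlinarith [hLnn]
  -- step 2 : sum over residues
  have hsub : ∀ r, r < m →
      (∑ j ∈ Finset.range ((n - r) / m), G (r + j * m)) ≤
        ∑ k ∈ (Finset.range n).filter (fun k => k % m = r), G k := by
    intro r hr
    have hinj : ∀ x ∈ Finset.range ((n - r) / m), ∀ y ∈ Finset.range ((n - r) / m),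
        r + x * m = r + y * m → x = y := by
      intro x _ y _ hxy
      have := Nat.eq_of_mul_eq_mul_right hm (by omega : x * m = y * m)
      exact this
    rw [← Finset.sum_image hinj]
    refine Finset.sum_le_sum_of_subset_of_nonneg ?_ (fun k _ _ => hGnn k)
    intro k hk
    obtain ⟨j, hj, rfl⟩ := Finset.mem_image.1 hk
    rw [Finset.mem_range] at hj
    have hdm := Nat.div_add_mod (n - r) m
    have hrn : r ≤ n := le_of_lt (hr.trans hmn)
    refine Finset.mem_filter.2 ⟨Finset.mem_range.2 ?_, ?_⟩
    · have hle : (j + 1) * m ≤ ((n - r) / m) * m := Nat.mul_le_mul_right m hj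
      have hle2 : ((n - r) / m) * m ≤ n - r := Nat.div_mul_le_self _ _
      have hexp : (j + 1) * m = j * m + m := by ring
      omega
    · rw [Nat.add_mul_mod_self_right, Nat.mod_eq_of_lt hr]
  have hfib : ∑ r ∈ Finset.range m, ∑ k ∈ (Finset.range n).filter (fun k => k % m = r), G k
      = ∑ k ∈ Finset.range n, G k :=
    Finset.sum_fiberwise_of_maps_to (fun k _ => Finset.mem_range.2 (Nat.mod_lt _ hm)) G
  have h2 : (m : ℝ) * EntropyAux.ent f P μ n ≤
      (∑ k ∈ Finset.range n, G k) + (m : ℝ) * (2 * (m : ℝ) * L) := by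
    have hsumstep := Finset.sum_le_sum (fun r hr => hstep r (Finset.mem_range.1 hr))
    rw [Finset.sum_const, Finset.card_range, nsmul_eq_mul] at hsumstep
    refine hsumstep.trans ?_
    rw [Finset.sum_add_distrib, Finset.sum_const, Finset.card_range, nsmul_eq_mul]
    gcongr ?_ + _
    calc ∑ r ∈ Finset.range m, ∑ j ∈ Finset.range ((n - r) / m), G (r + j * m)
        ≤ ∑ r ∈ Finset.range m, ∑ k ∈ (Finset.range n).filter (fun k => k % m = r), G k :=
          Finset.sum_le_sum fun r hr => hsub r (Finset.mem_range.1 hr)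
      _ = ∑ k ∈ Finset.range n, G k := hfib
  -- step 3 : concavity
  have h3 : ∑ k ∈ Finset.range n, G k ≤
      (n : ℝ) * EntropyAux.ent f P
        ((n : ℝ≥0∞)⁻¹ • ∑ k ∈ Finset.range n, Measure.map f^[k] μ) m :=
    EntropyAux.ent_avg n hn _ hprob m
  -- finish
  set E : ℝ := EntropyAux.ent f P μ n with hE
  set E' : ℝ := EntropyAux.ent f P
    ((n : ℝ≥0∞)⁻¹ • ∑ k ∈ Finset.range n, Measure.map f^[k] μ) m with hE'
  have key : (m : ℝ) * E ≤ (n : ℝ) * E' + 2 * (m : ℝ) ^ 2 * L := by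
    have := h2.trans (by linarith : (∑ k ∈ Finset.range n, G k) + (m : ℝ) * (2 * (m : ℝ) * L)
      ≤ (n : ℝ) * E' + (m : ℝ) * (2 * (m : ℝ) * L))
    calc (m : ℝ) * E ≤ (n : ℝ) * E' + (m : ℝ) * (2 * (m : ℝ) * L) := this
      _ = (n : ℝ) * E' + 2 * (m : ℝ) ^ 2 * L := by ring
  rw [hent μ n, hent _ m]
  have hn0 : (0 : ℝ) < (n : ℝ) := Nat.cast_pos.2 hn
  have hm0 : (0 : ℝ) < (m : ℝ) := Nat.cast_pos.2 hm
  calc (1 / (n : ℝ)) * E = ((n : ℝ) * (m : ℝ))⁻¹ * ((m : ℝ) * E) := by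
        field_simp
      _ ≤ ((n : ℝ) * (m : ℝ))⁻¹ * ((n : ℝ) * E' + 2 * (m : ℝ) ^ 2 * L) := by
        exact mul_le_mul_of_nonneg_left key (by positivity)
      _ = (1 / (m : ℝ)) * E' + (2 * (m : ℝ) / (n : ℝ)) * L := by
        field_simp
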